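/- Let A = (v_1, …, v_q) ⊂ ℤ^n be a homogeneous normal configuration. If the toric ideal I_A is minimally generated by a finite set B of binomials (i.e., B generates I_A but no proper subset of B generates I_A), then every binomial in B has a square-free term. -/

import Mathlib

open MvPolynomial

/-- The binomial `T^a - T^b` in `K[T_1,…,T_q]`. -/
noncomputable def binom (K : Type*) [Field K] {q : ℕ} (a b : Fin q → ℕ) :
    MvPolynomial (Fin q) K :=
  monomial (Finsupp.equivFunOnFinite.symm a) 1 -
    monomial (Finsupp.equivFunOnFinite.symm b) 1

/-- The toric ideal of the configuration `v`. -/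
noncomputable def toricIdeal (K : Type*) [Field K] {n q : ℕ} (v : Fin q → Fin n → ℤ) :
    Ideal (MvPolynomial (Fin q) K) :=
  Ideal.span { f | ∃ a b : Fin q → ℕ,
    (∑ i, a i • v i) = (∑ i, b i • v i) ∧ f = binom K a b }

/-- `α` is a circuit of the configuration `v`. -/
def IsCircuitVec {n q : ℕ} (v : Fin q → Fin n → ℤ) (α : Fin q → ℤ) : Prop :=
  α ≠ 0 ∧ (∑ i, α i • v i) = 0 ∧
    (∀ β : Fin q → ℚ, (∑ i, β i • (fun l => (v i l : ℚ))) = 0 → β ≠ 0 →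
      Function.support β ⊆ Function.support α →
      Function.support β = Function.support α) ∧
    Finset.univ.gcd α = 1

def posExp {q : ℕ} (α : Fin q → ℤ) : Fin q → ℕ := fun i => (α i).toNat

def negExp {q : ℕ} (α : Fin q → ℤ) : Fin q → ℕ := fun i => (-(α i)).toNat

/-- The binomial `T^a - T^b` has a square-free term. -/
def SqFreePair {q : ℕ} (a b : Fin q → ℕ) : Prop :=
  (∀ i, a i ≤ 1) ∨ (∀ i, b i ≤ 1)

/-- `f` is a circuit of the toric ideal of `v`. -/
def IsCircuitPoly (K : Type*) [Field K] {n q : ℕ} (v : Fin q → Fin n → ℤ)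
    (f : MvPolynomial (Fin q) K) : Prop :=
  ∃ α : Fin q → ℤ, IsCircuitVec v α ∧ f = binom K (posExp α) (negExp α)

/-- `f` is a circuit of the toric ideal of `v` having a square-free term. -/
def IsSqFreeCircuitPoly (K : Type*) [Field K] {n q : ℕ} (v : Fin q → Fin n → ℤ)
    (f : MvPolynomial (Fin q) K) : Prop :=
  ∃ α : Fin q → ℤ, IsCircuitVec v α ∧ f = binom K (posExp α) (negExp α) ∧
    SqFreePair (posExp α) (negExp α)

/-- The configuration lies on an affine hyperplane off the origin. -/
def IsHomogeneousConfig {n q : ℕ} (v : Fin q → Fin n → ℤ) : Prop :=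
  ∃ w : Fin n → ℝ, ∀ i, (∑ l, w l * (v i l : ℝ)) = 1

/-- `ℕA = ℤA ∩ ℝ₊A`. -/
def IsNormalConfig {n q : ℕ} (v : Fin q → Fin n → ℤ) : Prop :=
  ∀ x : Fin n → ℤ,
    x ∈ AddSubmonoid.closure (Set.range v) ↔
      (x ∈ AddSubgroup.closure (Set.range v) ∧
        ∃ c : Fin q → ℝ, (∀ i, 0 ≤ c i) ∧ ∀ l, (x l : ℝ) = ∑ i, c i * (v i l : ℝ))

/-- The toric ideal is generated by a finite set of circuits. -/
def GenByCircuits (K : Type*) [Field K] {n q : ℕ} (v : Fin q → Fin n → ℤ) : Prop :=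
  ∃ S : Finset (MvPolynomial (Fin q) K),
    (∀ f ∈ S, IsCircuitPoly K v f) ∧
      Ideal.span (S : Set (MvPolynomial (Fin q) K)) = toricIdeal K v

/-- The toric ideal is generated by a finite set of circuits with a square-free term. -/
def GenBySqFreeCircuits (K : Type*) [Field K] {n q : ℕ} (v : Fin q → Fin n → ℤ) : Prop :=
  ∃ S : Finset (MvPolynomial (Fin q) K),
    (∀ f ∈ S, IsSqFreeCircuitPoly K v f) ∧
      Ideal.span (S : Set (MvPolynomial (Fin q) K)) = toricIdeal K v

/-- `f` is a connector of the unbalanced binomial `T^a - T^b`, where `a` is the term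
with the smaller maximal exponent and `b` the one with the larger maximal exponent. -/
def IsConnector (K : Type*) [Field K] {n q : ℕ} (v : Fin q → Fin n → ℤ)
    (a b : Fin q → ℕ) (f : MvPolynomial (Fin q) K) : Prop :=
  ∃ c d : Fin q → ℕ, f = binom K c d ∧ f ∈ toricIdeal K v ∧
    (∀ i, c i ≤ 1) ∧ (∀ i, c i ≠ 0 → a i ≠ 0) ∧ (∃ i, d i ≠ 0 ∧ b i ≠ 0)

/-- Every unbalanced circuit of the toric ideal has a connector which is a
`K[T]`-linear combination of circuits with a square-free term. -/
def ConnectorCondition (K : Type*) [Field K] {n q : ℕ} (v : Fin q → Fin n → ℤ) : Prop :=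
  ∀ α : Fin q → ℤ, IsCircuitVec v α →
    Finset.univ.sup (posExp α) < Finset.univ.sup (negExp α) →
    ∃ f : MvPolynomial (Fin q) K, IsConnector K v (posExp α) (negExp α) f ∧
      f ∈ Ideal.span { g : MvPolynomial (Fin q) K | IsSqFreeCircuitPoly K v g }
/-! ### Auxiliary lemmas -/

section Aux

variable {K : Type*} [Field K] {n q : ℕ}

lemma symm_add (a b : Fin q → ℕ) :
    Finsupp.equivFunOnFinite.symm (a + b)
      = Finsupp.equivFunOnFinite.symm a + Finsupp.equivFunOnFinite.symm b := by
  ext i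
  simp

lemma degree_eq_sum_univ (d : Fin q →₀ ℕ) : d.degree = ∑ i, d i := by
  rw [Finsupp.degree]
  exact Finset.sum_subset (Finset.subset_univ _)
    (fun x _ hx => Finsupp.notMem_support_iff.mp hx)

lemma degree_symm (a : Fin q → ℕ) :
    (Finsupp.equivFunOnFinite.symm a).degree = ∑ i, a i := by
  rw [degree_eq_sum_univ]; simp

lemma degree_add' (d e : Fin q →₀ ℕ) : (d + e).degree = d.degree + e.degree := by
  simp [degree_eq_sum_univ, Finset.sum_add_distrib]

lemma binom_eq_zero_iff (a b : Fin q → ℕ) : binom K a b = 0 ↔ a = b := by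
  rw [binom, sub_eq_zero]
  constructor
  · intro h
    rcases (MvPolynomial.monomial_eq_monomial_iff _ _ _ _).mp h with ⟨h1, -⟩ | ⟨h1, -⟩
    · exact Finsupp.equivFunOnFinite.symm.injective h1 ▸ rfl
    · exact absurd h1 one_ne_zero
  · rintro rfl; rfl

lemma binom_isHomogeneous {a b : Fin q → ℕ} (h : ∑ i, a i = ∑ i, b i) :
    (binom K a b).IsHomogeneous (∑ i, a i) :=
  (isHomogeneous_monomial _ (degree_symm a)).sub
    (isHomogeneous_monomial _ ((degree_symm b).trans h.symm))

lemma X_mul_binom (j : Fin q) (a b : Fin q → ℕ) :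
    X j * binom K a b = binom K (a + Pi.single j 1) (b + Pi.single j 1) := by
  rw [binom, binom, mul_sub, X, monomial_mul, monomial_mul, one_mul,
    symm_add, symm_add, Finsupp.equivFunOnFinite_symm_single,
    add_comm (Finsupp.equivFunOnFinite.symm a), add_comm (Finsupp.equivFunOnFinite.symm b)]

lemma binom_trans (a b c : Fin q → ℕ) :
    binom K a c = binom K a b + binom K b c := by
  rw [binom, binom, binom]; abel

noncomputable def phi (K : Type*) [Field K] {n q : ℕ} (v : Fin q → Fin n → ℤ) :
    MvPolynomial (Fin q) K →ₐ[K] AddMonoidAlgebra K (Fin n → ℤ) :=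
  aeval fun i => AddMonoidAlgebra.single (v i) 1

lemma phi_monomial (v : Fin q → Fin n → ℤ) (a : Fin q → ℕ) :
    phi K v (monomial (Finsupp.equivFunOnFinite.symm a) (1 : K))
      = AddMonoidAlgebra.single (∑ i, a i • v i) 1 := by
  rw [phi, aeval_monomial, map_one, one_mul]
  rw [Finsupp.prod_fintype _ _ (fun i => pow_zero _)]
  have h1 : ∀ i : Fin q,
      AddMonoidAlgebra.single (M := Fin n → ℤ) (v i) (1:K) ^ (a i)
        = AddMonoidAlgebra.single (a i • v i) 1 := by
    intro i
    rw [AddMonoidAlgebra.single_pow, one_pow]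
  simp only [Finsupp.coe_equivFunOnFinite_symm]
  calc (∏ i, AddMonoidAlgebra.single (M := Fin n → ℤ) (v i) (1:K) ^ (a i))
      = ∏ i, AddMonoidAlgebra.single (a i • v i) (1:K) :=
        Finset.prod_congr rfl fun i _ => h1 i
    _ = AddMonoidAlgebra.single (∑ i, a i • v i) (∏ _i : Fin q, (1:K)) :=
        AddMonoidAlgebra.prod_single _ _ _
    _ = AddMonoidAlgebra.single (∑ i, a i • v i) 1 := by rw [Finset.prod_const_one]

lemma balanced_of_mem {v : Fin q → Fin n → ℤ} {a b : Fin q → ℕ}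
    (hmem : binom K a b ∈ toricIdeal K v) :
    ∑ i, a i • v i = ∑ i, b i • v i := by
  have hker : toricIdeal K v ≤ RingHom.ker (phi K v).toRingHom := by
    rw [toricIdeal, Ideal.span_le]
    rintro f ⟨a', b', hbal, rfl⟩
    simp only [SetLike.mem_coe, RingHom.mem_ker, AlgHom.toRingHom_eq_coe, RingHom.coe_coe]
    rw [binom, map_sub, phi_monomial, phi_monomial, hbal, sub_self]
  have h0 : phi K v (binom K a b) = 0 := hker hmem
  rw [binom, map_sub, phi_monomial, phi_monomial, sub_eq_zero] at h0
  rcases AddMonoidAlgebra.single_inj.mp h0 with ⟨h1, -⟩ | ⟨h1, -⟩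
  · exact h1
  · exact absurd h1 one_ne_zero

lemma cast_apply_sum (v : Fin q → Fin n → ℤ) (c : Fin q → ℕ) (l : Fin n) :
    (((∑ i, c i • v i) l : ℤ) : ℝ) = ∑ i, (c i : ℝ) * (v i l : ℝ) := by
  rw [Finset.sum_apply, Int.cast_sum]
  refine Finset.sum_congr rfl fun i _ => ?_
  have h1 : (c i • v i) l = (c i : ℤ) * v i l := by
    simp [mul_comm]
  rw [h1]
  push_cast
  ring

lemma sum_eq_of_balanced {v : Fin q → Fin n → ℤ} (hhom : IsHomogeneousConfig v)
    {a b : Fin q → ℕ} (hbal : ∑ i, a i • v i = ∑ i, b i • v i) :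
    ∑ i, a i = ∑ i, b i := by
  obtain ⟨w, hw⟩ := hhom
  have key : ∀ c : Fin q → ℕ,
      ∑ l, w l * (((∑ i, c i • v i) l : ℤ) : ℝ) = ((∑ i, c i : ℕ) : ℝ) := by
    intro c
    calc ∑ l, w l * (((∑ i, c i • v i) l : ℤ) : ℝ)
        = ∑ l, ∑ i, (c i : ℝ) * (w l * (v i l : ℝ)) := by
          refine Finset.sum_congr rfl fun l _ => ?_
          rw [cast_apply_sum v c l, Finset.mul_sum]
          exact Finset.sum_congr rfl fun i _ => by ring
      _ = ∑ i, (c i : ℝ) * ∑ l, w l * (v i l : ℝ) := by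
          rw [Finset.sum_comm]
          exact Finset.sum_congr rfl fun i _ => by rw [Finset.mul_sum]
      _ = ∑ i, (c i : ℝ) := by
          refine Finset.sum_congr rfl fun i _ => ?_
          rw [hw i, mul_one]
      _ = ((∑ i, c i : ℕ) : ℝ) := by push_cast; rfl
  have : ((∑ i, a i : ℕ) : ℝ) = ((∑ i, b i : ℕ) : ℝ) := by
    rw [← key a, ← key b, hbal]
  exact_mod_cast this

lemma sum_single_smul (v : Fin q → Fin n → ℤ) (j : Fin q) :
    ∑ i, (Pi.single j 1 : Fin q → ℕ) i • v i = v j := by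
  rw [Finset.sum_eq_single j]
  · simp
  · intro i _ hij
    simp [Pi.single_apply, hij]
  · simp

lemma rep_of_mem_closure {v : Fin q → Fin n → ℤ} {x : Fin n → ℤ}
    (hx : x ∈ AddSubmonoid.closure (Set.range v)) :
    ∃ c : Fin q → ℕ, x = ∑ i, c i • v i := by
  induction hx using AddSubmonoid.closure_induction with
  | mem y hy =>
      obtain ⟨i, rfl⟩ := hy
      exact ⟨Pi.single i 1, (sum_single_smul v i).symm⟩
  | zero => exact ⟨0, by simp⟩
  | add y z _ _ hy hz =>
      obtain ⟨c1, rfl⟩ := hy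
      obtain ⟨c2, rfl⟩ := hz
      exact ⟨c1 + c2, by simp [add_smul, Finset.sum_add_distrib]⟩

lemma mem_group_closure (v : Fin q → Fin n → ℤ) (a : Fin q → ℕ) (j k : Fin q) :
    (∑ i, a i • v i) - v j - v k ∈ AddSubgroup.closure (Set.range v) := by
  apply AddSubgroup.sub_mem
  apply AddSubgroup.sub_mem
  · refine AddSubgroup.sum_mem _ fun i _ => ?_
    have : v i ∈ AddSubgroup.closure (Set.range v) :=
      AddSubgroup.subset_closure (Set.mem_range_self i)
    exact nsmul_mem this _
  · exact AddSubgroup.subset_closure ⟨j, rfl⟩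
  · exact AddSubgroup.subset_closure ⟨k, rfl⟩

lemma hc_mul_eq_zero {s : MvPolynomial (Fin q) K} {ds e : ℕ}
    (hlt : e < ds) (hs : s.IsHomogeneous ds) (h : MvPolynomial (Fin q) K) :
    homogeneousComponent e (h * s) = 0 := by
  classical
  apply homogeneousComponent_eq_zero'
  intro d hd
  have hmem := MvPolynomial.support_mul h s hd
  rw [Finset.mem_add] at hmem
  obtain ⟨d1, _, d2, hd2, rfl⟩ := hmem
  have h2 : d2.degree = ds := by
    by_contra hne
    exact (MvPolynomial.mem_support_iff.mp hd2) (hs.coeff_eq_zero hne)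
  rw [degree_add', h2]
  omega

lemma hc_mul_homogeneous {s : MvPolynomial (Fin q) K} {ds e : ℕ}
    (hle : ds ≤ e) (hs : s.IsHomogeneous ds) (h : MvPolynomial (Fin q) K) :
    homogeneousComponent e (h * s) = homogeneousComponent (e - ds) h * s := by
  ext d
  rw [coeff_homogeneousComponent, coeff_mul, coeff_mul]
  split_ifs with hd
  · refine Finset.sum_congr rfl fun x hx => ?_
    rw [Finset.HasAntidiagonal.mem_antidiagonal] at hx
    rw [coeff_homogeneousComponent]
    by_cases hcs : coeff x.2 s = 0
    · rw [hcs, mul_zero, mul_zero]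
    · have h2 : x.2.degree = ds := by
        by_contra hne
        exact hcs (hs.coeff_eq_zero hne)
      have h1 : x.1.degree = e - ds := by
        have := degree_add' x.1 x.2
        rw [hx, hd, h2] at this
        omega
      rw [if_pos h1]
  · symm
    refine Finset.sum_eq_zero fun x hx => ?_
    rw [Finset.HasAntidiagonal.mem_antidiagonal] at hx
    rw [coeff_homogeneousComponent]
    by_cases hcs : coeff x.2 s = 0
    · rw [hcs, mul_zero]
    · have h2 : x.2.degree = ds := by
        by_contra hne
        exact hcs (hs.coeff_eq_zero hne)
      have h1 : x.1.degree ≠ e - ds := by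
        intro h1
        apply hd
        have := degree_add' x.1 x.2
        rw [hx, h1, h2] at this
        omega
      rw [if_neg h1, zero_mul]

/-- Graded avoidance: a homogeneous element of degree `< D` in the span of a finite set of
homogeneous polynomials lies in the span with an element of degree `D` removed. -/
lemma mem_span_erase_of_homogeneous
    (B : Finset (MvPolynomial (Fin q) K))
    (hB : ∀ s ∈ B, ∃ ds, s.IsHomogeneous ds)
    (f : MvPolynomial (Fin q) K) {D e : ℕ}
    (hfD : f.IsHomogeneous D) (hlt : e < D)
    {p : MvPolynomial (Fin q) K} (hp : p ∈ Ideal.span (B : Set (MvPolynomial (Fin q) K)))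
    (hpe : p.IsHomogeneous e) :
    p ∈ Ideal.span ((B : Set (MvPolynomial (Fin q) K)) \ {f}) := by
  classical
  obtain ⟨h, -, hh⟩ := Submodule.mem_span_finset.mp hp
  have hpc : homogeneousComponent e p = p := by
    have := homogeneousComponent_of_mem (p := p) (m := e) (n := e) hpe
    simpa using this
  have hdec : p = ∑ s ∈ B, homogeneousComponent e (h s * s) := by
    conv_lhs => rw [← hpc, ← hh]
    rw [map_sum]
    exact Finset.sum_congr rfl fun s _ => by rw [smul_eq_mul]
  rw [hdec]
  refine Ideal.sum_mem _ fun s hs => ?_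
  by_cases hsf : s = f
  · subst hsf
    rw [hc_mul_eq_zero hlt hfD]
    exact Ideal.zero_mem _
  · have hmem : s ∈ ((B : Set (MvPolynomial (Fin q) K)) \ {f}) := by
      simp [hs, hsf]
    obtain ⟨ds, hds⟩ := hB s hs
    rcases le_or_gt ds e with hle | hgt
    · rw [hc_mul_homogeneous hle hds]
      exact Ideal.mul_mem_left _ _ (Ideal.subset_span hmem)
    · rw [hc_mul_eq_zero hgt hds]
      exact Ideal.zero_mem _

end Aux

/-- If the toric ideal of a homogeneous normal configuration is minimally generated by a
finite set `B` of binomials, then every binomial of `B` has a square-free term. -/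
theorem sqFree_of_minimal_binomial_generation (K : Type*) [Field K] {n q : ℕ}
    (hn : 0 < n) (hq : 0 < q) (v : Fin q → Fin n → ℤ)
    (hhom : IsHomogeneousConfig v) (hnorm : IsNormalConfig v)
    (B : Finset (MvPolynomial (Fin q) K))
    (hbin : ∀ f ∈ B, ∃ a b : Fin q → ℕ, f = binom K a b)
    (hgen : Ideal.span (B : Set (MvPolynomial (Fin q) K)) = toricIdeal K v)
    (hmin : ∀ B' : Finset (MvPolynomial (Fin q) K), B' ⊂ B →
      Ideal.span (B' : Set (MvPolynomial (Fin q) K)) ≠ toricIdeal K v) :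
    ∀ f ∈ B, ∀ a b : Fin q → ℕ, f = binom K a b → SqFreePair a b := by
  classical
  intro f hf a b hfab
  by_contra hcon
  rw [SqFreePair] at hcon
  push_neg at hcon
  obtain ⟨⟨j, hj⟩, k, hk⟩ := hcon
  have hj2 : 2 ≤ a j := by omega
  have hk2 : 2 ≤ b k := by omega
  have hfI : f ∈ toricIdeal K v := hgen ▸ Ideal.subset_span hf
  have hbal : ∑ i, a i • v i = ∑ i, b i • v i := balanced_of_mem (hfab ▸ hfI)
  have hDab : ∑ i, a i = ∑ i, b i := sum_eq_of_balanced hhom hbal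
  -- the point γ - v j - v k lies in ℤA ∩ ℝ₊A, hence in ℕA by normality
  have hxgrp : (∑ i, a i • v i) - v j - v k ∈ AddSubgroup.closure (Set.range v) :=
    mem_group_closure v a j k
  have hxcone : ∃ c : Fin q → ℝ, (∀ i, 0 ≤ c i) ∧
      ∀ l, ((((∑ i, a i • v i) - v j - v k) l : ℤ) : ℝ) = ∑ i, c i * (v i l : ℝ) := by
    refine ⟨fun i => ((a i : ℝ) + (b i : ℝ))/2
      - (if i = j then 1 else 0) - (if i = k then 1 else 0), ?_, ?_⟩
    · intro i
      have h1 : (0:ℝ) ≤ (a i : ℝ) := Nat.cast_nonneg _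
      have h2 : (0:ℝ) ≤ (b i : ℝ) := Nat.cast_nonneg _
      rcases eq_or_ne i j with rfl | hij
      · rcases eq_or_ne i k with rfl | hik
        · have hj2' : (2:ℝ) ≤ (a i : ℝ) := by exact_mod_cast hj2
          have hk2' : (2:ℝ) ≤ (b i : ℝ) := by exact_mod_cast hk2
          norm_num
          linarith
        · have hj2' : (2:ℝ) ≤ (a i : ℝ) := by exact_mod_cast hj2
          norm_num [hik]
          linarith
      · rcases eq_or_ne i k with rfl | hik
        · have hk2' : (2:ℝ) ≤ (b i : ℝ) := by exact_mod_cast hk2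
          norm_num [hij]
          linarith
        · norm_num [hij, hik]
          linarith
    · intro l
      have hbl : ∑ i, ((b i : ℝ) * (v i l : ℝ)) = ∑ i, ((a i : ℝ) * (v i l : ℝ)) := by
        rw [← cast_apply_sum v a l, ← cast_apply_sum v b l, hbal]
      have hX : ((((∑ i, a i • v i) - v j - v k) l : ℤ) : ℝ)
          = (∑ i, (a i : ℝ) * (v i l : ℝ)) - (v j l : ℝ) - (v k l : ℝ) := by
        rw [Pi.sub_apply, Pi.sub_apply, Int.cast_sub, Int.cast_sub, cast_apply_sum]
      rw [hX]
      have hterm : ∀ i : Fin q, (((a i : ℝ) + (b i : ℝ))/2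
            - (if i = j then (1:ℝ) else 0) - (if i = k then 1 else 0)) * (v i l : ℝ)
          = ((a i : ℝ) * (v i l : ℝ) + (b i : ℝ) * (v i l : ℝ))/2
            - (if i = j then (v i l : ℝ) else 0) - (if i = k then (v i l : ℝ) else 0) := by
        intro i
        split_ifs <;> ring
      rw [Finset.sum_congr rfl (fun i _ => hterm i), Finset.sum_sub_distrib,
        Finset.sum_sub_distrib, Finset.sum_ite_eq' Finset.univ j,
        Finset.sum_ite_eq' Finset.univ k]
      simp only [Finset.mem_univ, if_true]
      rw [← Finset.sum_div, Finset.sum_add_distrib, hbl]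
      ring
  have hxmem : (∑ i, a i • v i) - v j - v k ∈ AddSubmonoid.closure (Set.range v) :=
    (hnorm _).mpr ⟨hxgrp, hxcone⟩
  obtain ⟨c, hc⟩ := rep_of_mem_closure hxmem
  -- split off one variable from each side
  obtain ⟨a', ha'⟩ : ∃ a' : Fin q → ℕ, a = a' + Pi.single j 1 := by
    refine ⟨fun i => a i - (if i = j then 1 else 0), ?_⟩
    funext i
    rcases eq_or_ne i j with rfl | hij
    · simp [Pi.single_eq_same]
      omega
    · simp [Pi.single_apply, hij]
  obtain ⟨b', hb'⟩ : ∃ b' : Fin q → ℕ, b = b' + Pi.single k 1 := by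
    refine ⟨fun i => b i - (if i = k then 1 else 0), ?_⟩
    funext i
    rcases eq_or_ne i k with rfl | hik
    · simp [Pi.single_eq_same]
      omega
    · simp [Pi.single_apply, hik]
  have hsum_split : ∀ u w : Fin q → ℕ,
      ∑ i, (u + w) i • v i = (∑ i, u i • v i) + ∑ i, w i • v i := by
    intro u w
    rw [← Finset.sum_add_distrib]
    exact Finset.sum_congr rfl fun i _ => by rw [Pi.add_apply, add_smul]
  have hga : ∑ i, a' i • v i = (∑ i, a i • v i) - v j := by
    have h1 := hsum_split a' (Pi.single j 1)
    rw [← ha', sum_single_smul] at h1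
    exact eq_sub_of_add_eq h1.symm
  have hgb : ∑ i, b' i • v i = (∑ i, b i • v i) - v k := by
    have h1 := hsum_split b' (Pi.single k 1)
    rw [← hb', sum_single_smul] at h1
    exact eq_sub_of_add_eq h1.symm
  have hgbal : ∑ i, a' i • v i = ∑ i, (c + Pi.single k 1 : Fin q → ℕ) i • v i := by
    rw [hsum_split, sum_single_smul, ← hc, hga]
    abel
  have hhbal : ∑ i, (c + Pi.single j 1 : Fin q → ℕ) i • v i = ∑ i, b' i • v i := by
    rw [hsum_split, sum_single_smul, ← hc, hgb, ← hbal]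
    abel
  have gmem : binom K a' (c + Pi.single k 1) ∈ toricIdeal K v :=
    Ideal.subset_span ⟨a', c + Pi.single k 1, hgbal, rfl⟩
  have hmem2 : binom K (c + Pi.single j 1) b' ∈ toricIdeal K v :=
    Ideal.subset_span ⟨c + Pi.single j 1, b', hhbal, rfl⟩
  -- the key identity f = X j * g + X k * h
  have hident : binom K a b = X j * binom K a' (c + Pi.single k 1)
      + X k * binom K (c + Pi.single j 1) b' := by
    rw [X_mul_binom, X_mul_binom, ← ha', ← hb',
      add_right_comm c (Pi.single j 1) (Pi.single k 1)]
    exact binom_trans a (c + Pi.single k 1 + Pi.single j 1) b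
  -- degree bookkeeping
  have hsum1 : ∀ (u : Fin q → ℕ) (j0 : Fin q),
      ∑ i, (u + Pi.single j0 1 : Fin q → ℕ) i = (∑ i, u i) + 1 := by
    intro u j0
    simp only [Pi.add_apply]
    rw [Finset.sum_add_distrib]
    simp [Pi.single_apply]
  have hA : ∑ i, a i = (∑ i, a' i) + 1 := by
    calc ∑ i, a i = ∑ i, (a' + Pi.single j 1 : Fin q → ℕ) i := by rw [← ha']
      _ = _ := hsum1 a' j
  have hBsum : ∑ i, b i = (∑ i, b' i) + 1 := by
    calc ∑ i, b i = ∑ i, (b' + Pi.single k 1 : Fin q → ℕ) i := by rw [← hb']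
      _ = _ := hsum1 b' k
  have haj : a j ≤ ∑ i, a i := Finset.single_le_sum (fun i _ => Nat.zero_le _) (Finset.mem_univ j)
  have ghom : (binom K a' (c + Pi.single k 1)).IsHomogeneous (∑ i, a' i) :=
    binom_isHomogeneous (sum_eq_of_balanced hhom hgbal)
  have hhom2 : (binom K (c + Pi.single j 1) b').IsHomogeneous (∑ i, (c + Pi.single j 1 : Fin q → ℕ) i) :=
    binom_isHomogeneous (sum_eq_of_balanced hhom hhbal)
  have hsum_h : ∑ i, (c + Pi.single j 1 : Fin q → ℕ) i = ∑ i, b' i := sum_eq_of_balanced hhom hhbal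
  have hlt_g : ∑ i, a' i < ∑ i, a i := by omega
  have hlt_h : ∑ i, (c + Pi.single j 1 : Fin q → ℕ) i < ∑ i, a i := by omega
  -- every member of B is homogeneous
  have hBhom : ∀ s ∈ B, ∃ ds, s.IsHomogeneous ds := by
    intro s hs
    obtain ⟨as, bs, hsab⟩ := hbin s hs
    have hsI : s ∈ toricIdeal K v := hgen ▸ Ideal.subset_span hs
    have hbal' := balanced_of_mem (hsab ▸ hsI)
    exact ⟨∑ i, as i, hsab ▸ binom_isHomogeneous (sum_eq_of_balanced hhom hbal')⟩
  have hfhom : f.IsHomogeneous (∑ i, a i) := hfab ▸ binom_isHomogeneous hDab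
  -- g and h lie in the span of B \ {f}
  have hgspan : binom K a' (c + Pi.single k 1) ∈
      Ideal.span ((B : Set (MvPolynomial (Fin q) K)) \ {f}) :=
    mem_span_erase_of_homogeneous B hBhom f hfhom hlt_g (by rw [hgen]; exact gmem) ghom
  have hhspan : binom K (c + Pi.single j 1) b' ∈
      Ideal.span ((B : Set (MvPolynomial (Fin q) K)) \ {f}) :=
    mem_span_erase_of_homogeneous B hBhom f hfhom hlt_h (by rw [hgen]; exact hmem2) hhom2
  have hfspan : f ∈ Ideal.span ((B : Set (MvPolynomial (Fin q) K)) \ {f}) := by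
    have hsum := Ideal.add_mem _ (Ideal.mul_mem_left _ (X j) hgspan)
      (Ideal.mul_mem_left _ (X k) hhspan)
    rwa [← hident, ← hfab] at hsum
  -- contradiction with minimality
  refine hmin (B.erase f) (Finset.erase_ssubset hf) ?_
  rw [Finset.coe_erase]
  apply le_antisymm
  · rw [← hgen]
    exact Ideal.span_mono fun s hs => hs.1
  · rw [← hgen, Ideal.span_le]
    intro s hs
    by_cases hsf : s = f
    · subst hsf
      exact hfspan
    · exact Ideal.subset_span ⟨hs, hsf⟩
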